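/- Let k ≥ 2, γ ∈ ℝ with γ ≥ -k, b ∈ (1,2), C_ξ ≥ 1, and suppose 0 ≤ d₁ ≤ br and 0 ≤ d₂ ≤ bC_ξ r with r > 0. Then there exists a constant c = c(b,C_ξ,k,γ) > 0 such that ∫_{(d₁+r)/2}^{d₁+r} ∫_{(d₂+r)/2}^{d₂+r} s^{k-2}(s+y)^γ y² ds dy ≥ c (d₁+r)² (d₂+r)^γ r^k. -/

import Mathlib

open MeasureTheory

private lemma rpow_sandwich {γ u v x : ℝ} (hu : 0 < u) (hux : u ≤ x) (hxv : x ≤ v) :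
    min (u ^ γ) (v ^ γ) ≤ x ^ γ ∧ x ^ γ ≤ max (u ^ γ) (v ^ γ) := by
  rcases le_or_gt 0 γ with hγ | hγ
  · exact ⟨le_trans (min_le_left _ _) (Real.rpow_le_rpow hu.le hux hγ),
      le_trans (Real.rpow_le_rpow (hu.trans_le hux).le hxv hγ) (le_max_right _ _)⟩
  · exact ⟨le_trans (min_le_right _ _) (Real.rpow_le_rpow_of_nonpos (hu.trans_le hux) hxv hγ.le),
      le_trans (Real.rpow_le_rpow_of_nonpos hu hux hγ.le) (le_max_left _ _)⟩

private lemma cont_max_rpow {c : ℝ} (hc : 0 < c) (e : ℝ) :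
    Continuous (fun x : ℝ => max x c ^ e) := by
  rw [continuous_iff_continuousAt]
  intro x
  exact ((continuous_id.max continuous_const).continuousAt).rpow_const
    (Or.inl (by positivity))

set_option maxHeartbeats 1000000 in
/-- Lower bound of the doubling estimate: restricting the integral to the upper halves
of both ranges, `∫_{(d₁+r)/2}^{d₁+r} ∫_{(d₂+r)/2}^{d₂+r} s^{k-2}(s+y)^γ y² ds dy ≥
c (d₁+r)² (d₂+r)^γ r^k`. -/
theorem stmt8 (k : ℕ) (hk : 2 ≤ k) (γ : ℝ) (hγ : -(k : ℝ) ≤ γ)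
    (b Cξ : ℝ) (hb1 : 1 < b) (hb2 : b < 2) (hCξ : 1 ≤ Cξ) :
    ∃ c : ℝ, 0 < c ∧ ∀ r d₁ d₂ : ℝ, 0 < r → 0 ≤ d₁ → 0 ≤ d₂ →
      d₁ ≤ b * r → d₂ ≤ b * Cξ * r →
      c * (d₁ + r) ^ 2 * (d₂ + r) ^ γ * r ^ k ≤
      ∫ y in Set.Ioc ((d₁ + r) / 2) (d₁ + r), ∫ s in Set.Ioc ((d₂ + r) / 2) (d₂ + r),
        s ^ ((k : ℝ) - 2) * (s + y) ^ γ * y ^ 2 := by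
  set c₀ : ℝ := min ((1 / 2 : ℝ) ^ γ) ((4 : ℝ) ^ γ) with hc₀def
  have hc₀ : 0 < c₀ :=
    lt_min (Real.rpow_pos_of_pos (by norm_num) _) (Real.rpow_pos_of_pos (by norm_num) _)
  refine ⟨c₀ / 2 ^ (k + 2), by positivity, ?_⟩
  intro r d₁ d₂ hr hd₁ hd₂ hd₁b hd₂b
  set P : ℝ := d₁ + r with hPdef
  set Q : ℝ := d₂ + r with hQdef
  have hP : 0 < P := by positivity
  have hQ : 0 < Q := by positivity
  have hQ2 : 0 < Q / 2 := by positivity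
  have hrP : r ≤ P := by rw [hPdef]; linarith
  have hrQ : r ≤ Q := by rw [hQdef]; linarith
  have hP3r : P ≤ 3 * r := by
    have : d₁ ≤ 2 * r := hd₁b.trans (by nlinarith)
    rw [hPdef]; linarith
  have hP3Q : P ≤ 3 * Q := hP3r.trans (by linarith)
  -- the modified (globally continuous) integrand
  set G : ℝ → ℝ → ℝ :=
    fun y s => max s (Q / 2) ^ ((k : ℝ) - 2) * max (s + y) (Q / 2) ^ γ * y ^ 2 with hGdef
  have hGeq : ∀ y ∈ Set.Ioc (P / 2) P, ∀ s ∈ Set.Ioc (Q / 2) Q,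
      G y s = s ^ ((k : ℝ) - 2) * (s + y) ^ γ * y ^ 2 := by
    intro y hy s hs
    have h1 : max s (Q / 2) = s := max_eq_left hs.1.le
    have h2 : max (s + y) (Q / 2) = s + y := by
      apply max_eq_left
      have : 0 < y := lt_of_lt_of_le (by positivity) hy.1.le
      linarith [hs.1]
    simp [hGdef, h1, h2]
  have hGcont : Continuous (fun p : ℝ × ℝ => G p.1 p.2) := by
    apply Continuous.mul
    apply Continuous.mul
    · exact (cont_max_rpow hQ2 _).comp continuous_snd
    · exact (cont_max_rpow hQ2 γ).comp (continuous_snd.add continuous_fst)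
    · exact continuous_fst.pow 2
  -- pointwise lower bound on the domain
  set M : ℝ := (Q / 2) ^ ((k : ℝ) - 2) * (c₀ * Q ^ γ) * (P / 2) ^ 2 with hMdef
  have hk2 : (0 : ℝ) ≤ (k : ℝ) - 2 := by
    have : (2 : ℝ) ≤ (k : ℝ) := by exact_mod_cast hk
    linarith
  have hlow : ∀ y ∈ Set.Ioc (P / 2) P, ∀ s ∈ Set.Ioc (Q / 2) Q, M ≤ G y s := by
    intro y hy s hs
    have hy0 : 0 < y := lt_of_lt_of_le (by positivity) hy.1.le
    rw [hGeq y hy s hs]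
    have h1 : (Q / 2) ^ ((k : ℝ) - 2) ≤ s ^ ((k : ℝ) - 2) :=
      Real.rpow_le_rpow hQ2.le hs.1.le hk2
    have h2 : c₀ * Q ^ γ ≤ (s + y) ^ γ := by
      have hsy1 : Q / 2 ≤ s + y := by linarith [hs.1]
      have hsy2 : s + y ≤ 4 * Q := by
        have := hs.2; have := hy.2; linarith
      have hmin := (rpow_sandwich (γ := γ) hQ2 hsy1 hsy2).1
      refine le_trans (le_of_eq ?_) hmin
      have e2 : ((Q / 2 : ℝ)) ^ γ = (1 / 2 : ℝ) ^ γ * Q ^ γ := by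
        rw [show (Q / 2 : ℝ) = (1 / 2) * Q by ring, Real.mul_rpow (by norm_num) hQ.le]
      have e3 : ((4 * Q : ℝ)) ^ γ = (4 : ℝ) ^ γ * Q ^ γ := by
        rw [Real.mul_rpow (by norm_num) hQ.le]
      rw [e2, e3, hc₀def, min_mul_of_nonneg _ _ (Real.rpow_nonneg hQ.le γ)]
    have h3 : (P / 2) ^ 2 ≤ y ^ 2 := by
      have := hy.1.le
      nlinarith [hP]
    have hs0 : (0:ℝ) ≤ s ^ ((k:ℝ) - 2) := Real.rpow_nonneg (hQ2.trans hs.1).le _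
    calc M = (Q / 2) ^ ((k : ℝ) - 2) * (c₀ * Q ^ γ) * (P / 2) ^ 2 := hMdef
      _ ≤ s ^ ((k : ℝ) - 2) * (s + y) ^ γ * y ^ 2 := by
          apply mul_le_mul (mul_le_mul h1 h2 (by positivity) hs0) h3 (by positivity)
          have hsy0 : (0:ℝ) ≤ (s + y) ^ γ :=
            Real.rpow_nonneg (by linarith [hs.1, hy0] : (0:ℝ) ≤ s + y) _
          positivity
  -- pointwise upper bound (for integrability of the inner integral)
  set Cup : ℝ := Q ^ ((k : ℝ) - 2) * max ((Q / 2) ^ γ) ((4 * Q) ^ γ) * P ^ 2 with hCupdef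
  have hupp : ∀ y ∈ Set.Ioc (P / 2) P, ∀ s ∈ Set.Ioc (Q / 2) Q, ‖G y s‖ ≤ Cup := by
    intro y hy s hs
    have hy0 : 0 < y := lt_of_lt_of_le (by positivity) hy.1.le
    rw [hGeq y hy s hs]
    have hs0 : 0 < s := hQ2.trans hs.1
    have hsy0 : 0 < s + y := by linarith
    rw [Real.norm_eq_abs, abs_of_nonneg (by positivity)]
    have h1 : s ^ ((k : ℝ) - 2) ≤ Q ^ ((k : ℝ) - 2) :=
      Real.rpow_le_rpow hs0.le hs.2 hk2
    have h2 : (s + y) ^ γ ≤ max ((Q / 2) ^ γ) ((4 * Q) ^ γ) := by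
      have hsy1 : Q / 2 ≤ s + y := by linarith [hs.1]
      have hsy2 : s + y ≤ 4 * Q := by have := hs.2; have := hy.2; linarith
      exact (rpow_sandwich (γ := γ) hQ2 hsy1 hsy2).2
    have h3 : y ^ 2 ≤ P ^ 2 := by nlinarith [hy.2]
    apply mul_le_mul (mul_le_mul h1 h2 (by positivity) (by positivity)) h3 (by positivity)
    have hmx : (0:ℝ) < max ((Q / 2) ^ γ) ((4 * Q) ^ γ) :=
      lt_max_of_lt_left (Real.rpow_pos_of_pos hQ2 γ)
    positivity
  -- the integrals agree with those of G
  have hcongr : (∫ y in Set.Ioc (P / 2) P, ∫ s in Set.Ioc (Q / 2) Q,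
        s ^ ((k : ℝ) - 2) * (s + y) ^ γ * y ^ 2)
      = ∫ y in Set.Ioc (P / 2) P, ∫ s in Set.Ioc (Q / 2) Q, G y s := by
    apply setIntegral_congr_fun measurableSet_Ioc
    intro y hy
    apply setIntegral_congr_fun measurableSet_Ioc
    intro s hs
    exact (hGeq y hy s hs).symm
  rw [hcongr]
  -- inner integral: strongly measurable in y, bounded, hence integrable on the outer set
  have hinner_sm : StronglyMeasurable (fun y => ∫ s in Set.Ioc (Q / 2) Q, G y s) :=
    (hGcont.stronglyMeasurable).integral_prod_right'
  have hμQ : (volume (Set.Ioc (Q / 2) Q)).toReal = Q / 2 := by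
    rw [Real.volume_Ioc, ENNReal.toReal_ofReal (by linarith)]
    ring
  have hμP : (volume (Set.Ioc (P / 2) P)).toReal = P / 2 := by
    rw [Real.volume_Ioc, ENNReal.toReal_ofReal (by linarith)]
    ring
  have hvolQ : volume (Set.Ioc (Q / 2) Q) < ⊤ := by
    rw [Real.volume_Ioc]; exact ENNReal.ofReal_lt_top
  have hvolP : volume (Set.Ioc (P / 2) P) < ⊤ := by
    rw [Real.volume_Ioc]; exact ENNReal.ofReal_lt_top
  have hGintOn : ∀ y : ℝ, IntegrableOn (fun s => G y s) (Set.Ioc (Q / 2) Q) := by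
    intro y
    exact (hGcont.comp (Continuous.prodMk_right y)).integrableOn_Ioc
  have hinner_int : IntegrableOn (fun y => ∫ s in Set.Ioc (Q / 2) Q, G y s)
      (Set.Ioc (P / 2) P) := by
    apply Integrable.mono' (integrable_const (Cup * (Q / 2)))
      hinner_sm.aestronglyMeasurable
    refine (ae_restrict_iff' measurableSet_Ioc).2 (Filter.Eventually.of_forall ?_)
    intro y hy
    have := norm_setIntegral_le_of_norm_le_const (f := fun s => G y s) hvolQ
      (fun s hs => hupp y hy s hs)
    rwa [measureReal_def, hμQ] at this
  -- apply the constant lower bound twice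
  have step1 : ∀ y ∈ Set.Ioc (P / 2) P,
      M * (Q / 2) ≤ ∫ s in Set.Ioc (Q / 2) Q, G y s := by
    intro y hy
    have := setIntegral_ge_of_const_le (c := M) measurableSet_Ioc hvolQ.ne
      (fun s hs => hlow y hy s hs) (hGintOn y)
    rwa [measureReal_def, hμQ, smul_eq_mul, mul_comm] at this
  have step2 : (M * (Q / 2)) * (P / 2) ≤
      ∫ y in Set.Ioc (P / 2) P, ∫ s in Set.Ioc (Q / 2) Q, G y s := by
    have := setIntegral_ge_of_const_le (c := M * (Q / 2)) measurableSet_Ioc hvolP.ne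
      step1 hinner_int
    rwa [measureReal_def, hμP, smul_eq_mul, mul_comm] at this
  refine le_trans ?_ step2
  -- final arithmetic
  have hQγ : (0:ℝ) < Q ^ γ := Real.rpow_pos_of_pos hQ γ
  have e1 : M * (Q / 2) * (P / 2)
      = c₀ * Q ^ γ * ((Q / 2) ^ ((k : ℝ) - 2) * (Q / 2)) * (P / 2) ^ 3 := by
    rw [hMdef]; ring
  have e2 : (Q / 2) ^ ((k : ℝ) - 2) * (Q / 2) = (Q / 2) ^ ((k : ℝ) - 1) := by
    rw [← Real.rpow_add_one hQ2.ne' ((k : ℝ) - 2)]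
    congr 1
    ring
  have hk1 : (0:ℝ) ≤ (k : ℝ) - 1 := by linarith
  have h4 : (r / 2) ^ ((k : ℝ) - 1) ≤ (Q / 2) ^ ((k : ℝ) - 1) :=
    Real.rpow_le_rpow (by positivity) (by linarith) hk1
  have h5 : (P / 2) ^ 2 * (r / 2) ≤ (P / 2) ^ 3 := by
    have : r / 2 ≤ P / 2 := by linarith
    nlinarith [sq_nonneg (P / 2), hP]
  have e3 : (r / 2) ^ ((k : ℝ) - 1) * (r / 2) = r ^ k / 2 ^ k := by
    have h20 : (r / 2 : ℝ) ≠ 0 := by positivity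
    rw [← Real.rpow_add_one h20 ((k : ℝ) - 1),
      show ((k:ℝ) - 1 + 1) = ((k : ℕ) : ℝ) by push_cast; ring, Real.rpow_natCast, div_pow]
  rw [e1, e2]
  have expand : c₀ / 2 ^ (k + 2) * P ^ 2 * Q ^ γ * r ^ k
      = c₀ * Q ^ γ * (r / 2) ^ ((k:ℝ) - 1) * ((P / 2) ^ 2 * (r / 2)) := by
    rw [show c₀ * Q ^ γ * (r / 2) ^ ((k:ℝ) - 1) * ((P / 2) ^ 2 * (r / 2))
        = c₀ * Q ^ γ * ((r / 2) ^ ((k:ℝ) - 1) * (r / 2)) * (P / 2) ^ 2 by ring, e3]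
    field_simp
    ring
  rw [expand]
  gcongr c₀ * Q ^ γ * ?_ * ?_ <;> first | positivity | exact h4 | exact h5
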